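/- Let G be a compact Hausdorff topological group acting on a set X such that every point stabilizer is closed and G separates X. Then every point stabilizer G_x has Haar measure zero in G, and moreover for every finite subset Y ⊆ X and every x ∈ X \ Y, the stabilizer of x inside the compact group G_Y (the pointwise stabilizer of Y, a closed subgroup of G) is closed in G_Y and has measure zero with respect to the Haar probability measure of G_Y. -/

import Mathlib

open MeasureTheory Pointwise

/-- A group `G` acting on a set `X` *separates* `X` if for every finite subset
`Y ⊆ X` and every point `x ∉ Y` there is `g ∈ G` fixing every point of `Y`
pointwise and moving `x`. -/
def Separates (G X : Type*) [Group G] [MulAction G X] : Prop :=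
  ∀ (Y : Finset X) (x : X), x ∉ Y → ∃ g : G, (∀ y ∈ Y, g • y = y) ∧ g • x ≠ x

/-- In a compact group with a Haar probability measure, a closed point
stabilizer of a point with infinite orbit is null. -/
lemma stabilizer_null_of_orbit_infinite {G X : Type*} [Group G]
    [TopologicalSpace G] [IsTopologicalGroup G] [CompactSpace G] [T2Space G]
    [MeasurableSpace G] [BorelSpace G]
    (μ : Measure G) [μ.IsHaarMeasure] [IsProbabilityMeasure μ]
    [MulAction G X] (x : X)
    (hcl : IsClosed {g : G | g • x = x})
    (hinf : (MulAction.orbit G x).Infinite) :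
    μ {g : G | g • x = x} = 0 := by
  set H := MulAction.stabilizer G x with hH
  have hset : {g : G | g • x = x} = (H : Set G) := rfl
  by_contra hne
  have hpos : 0 < μ (H : Set G) := by
    rw [hset] at hne
    exact pos_iff_ne_zero.mpr hne
  have hmeas : MeasurableSet (H : Set G) := by
    rw [← hset]; exact hcl.measurableSet
  have hnhds : (H : Set G) / (H : Set G) ∈ nhds (1 : G) :=
    MeasureTheory.Measure.div_mem_nhds_one_of_haar_pos μ (H : Set G) hmeas hpos
  have hsub : (H : Set G) / (H : Set G) ⊆ (H : Set G) := by
    rintro z ⟨a, ha, b, hb, rfl⟩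
    exact H.div_mem ha hb
  have hopen : IsOpen (H : Set G) :=
    Subgroup.isOpen_of_mem_nhds H (Filter.mem_of_superset hnhds hsub)
  have hfinq : Finite (G ⧸ H) := H.quotient_finite_of_isOpen hopen
  have : Finite (MulAction.orbit G x) :=
    Finite.of_equiv _ (MulAction.orbitEquivQuotientStabilizer G x).symm
  exact hinf (Set.toFinite _)

/-- Let `G` be a compact Hausdorff topological group with Haar probability
measure `μ`, acting on a set `X` with closed point stabilizers and separating
`X`.  Then every point stabilizer is `μ`-null, and for every finite `Y ⊆ X` and
every `x ∉ Y` the stabilizer of `x` inside the compact group `G_Y` (the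
pointwise stabilizer of `Y`) is closed in `G_Y` and is null for the Haar
probability measure of `G_Y`. -/
theorem compact_separating_strongly_topological {G X : Type*} [Group G]
    [TopologicalSpace G] [IsTopologicalGroup G] [CompactSpace G] [T2Space G]
    [MeasurableSpace G] [BorelSpace G]
    (μ : Measure G) [μ.IsHaarMeasure] [IsProbabilityMeasure μ]
    [MulAction G X]
    (hclosed : ∀ x : X, IsClosed {g : G | g • x = x})
    (hsep : Separates G X) :
    (∀ x : X, μ {g : G | g • x = x} = 0) ∧
    ∀ (Y : Finset X) (x : X), x ∉ Y →
      IsClosed {h : ↥(fixingSubgroup G (↑Y : Set X)) | (h : G) • x = x} ∧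
      ∀ ν : Measure ↥(fixingSubgroup G (↑Y : Set X)),
        ν.IsHaarMeasure → IsProbabilityMeasure ν →
          ν {h : ↥(fixingSubgroup G (↑Y : Set X)) | (h : G) • x = x} = 0 := by
  classical
  constructor
  · intro x
    apply stabilizer_null_of_orbit_infinite μ x (hclosed x)
    intro hfin
    obtain ⟨g, hgY, hgx⟩ := hsep (hfin.toFinset.erase x) x (Finset.notMem_erase x _)
    have hmem : g • x ∈ hfin.toFinset.erase x := by
      rw [Finset.mem_erase, Set.Finite.mem_toFinset]
      exact ⟨hgx, ⟨g, rfl⟩⟩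
    have := hgY _ hmem
    exact hgx (smul_left_cancel g this)
  · intro Y x hxY
    set H := fixingSubgroup G (↑Y : Set X) with hHdef
    have hHclosed : IsClosed (H : Set G) := by
      have : (H : Set G) = ⋂ y ∈ (↑Y : Set X), {g : G | g • y = y} := by
        ext g
        simp only [Set.mem_iInter, SetLike.mem_coe, hHdef, mem_fixingSubgroup_iff,
          Set.mem_setOf_eq, Finset.mem_coe]
      rw [this]
      exact isClosed_biInter fun y _ => hclosed y
    have : CompactSpace ↥H := isCompact_iff_compactSpace.mp hHclosed.isCompact
    have : BorelSpace ↥H := Subtype.borelSpace (H : Set G)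
    have hclH : IsClosed {h : ↥H | (h : G) • x = x} := by
      have : {h : ↥H | (h : G) • x = x} = (Subtype.val) ⁻¹' {g : G | g • x = x} := rfl
      rw [this]
      exact (hclosed x).preimage continuous_subtype_val
    refine ⟨hclH, fun ν hνh hνp => ?_⟩
    have hclH' : IsClosed {h : ↥H | h • x = x} := hclH
    apply stabilizer_null_of_orbit_infinite ν x hclH'
    intro hfin
    set Y' := Y ∪ (hfin.toFinset.image (fun z => z)).erase x with hY'def
    have hxY' : x ∉ Y' := by
      simp only [hY'def, Finset.mem_union, Finset.mem_erase]
      push_neg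
      exact ⟨hxY, fun h => absurd rfl h⟩
    obtain ⟨g, hgY, hgx⟩ := hsep Y' x hxY'
    have hgH : g ∈ H := by
      rw [hHdef, mem_fixingSubgroup_iff]
      intro y hy
      exact hgY y (Finset.mem_union_left _ (by exact_mod_cast hy))
    have horb : g • x ∈ MulAction.orbit ↥H x := ⟨⟨g, hgH⟩, rfl⟩
    have hmem : g • x ∈ Y' := by
      apply Finset.mem_union_right
      rw [Finset.mem_erase, Finset.mem_image]
      exact ⟨hgx, ⟨g • x, (Set.Finite.mem_toFinset hfin).mpr horb, rfl⟩⟩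
    have := hgY _ hmem
    exact hgx (smul_left_cancel g this)
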